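/- Suppose F : ℝ → ℝ is continuous, positive for large t, satisfies F(t) = G(t) + O(t^{-2}) as t → +∞ where G(t) := ∫_t^∞ F²(t') dt' is finite for large t, and F(t) ~ t^{-1} as t → +∞ (i.e., c₁/t ≤ F(t) ≤ c₂/t for large t). Then F(t) = 1/(t + O(log t)) as t → +∞; in particular lim_{t→∞} t F(t) = 1. -/

import Mathlib

open Real MeasureTheory Filter Asymptotics

lemma integral_Ioi_div_sq (c : ℝ) {t : ℝ} (ht : 0 < t) :
    ∫ s in Set.Ioi t, (c / s) ^ 2 = c ^ 2 / t := by
  have h : Set.EqOn (fun s => (c / s) ^ 2) (fun s => c ^ 2 * s ^ (-2 : ℝ)) (Set.Ioi t) := by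
    intro s hs
    have hs0 : 0 < s := ht.trans hs
    simp only
    rw [Real.rpow_neg hs0.le, div_pow,
      show ((2:ℝ)) = ((2:ℕ):ℝ) by norm_num, Real.rpow_natCast]
    field_simp
  rw [MeasureTheory.setIntegral_congr_fun measurableSet_Ioi h, MeasureTheory.integral_const_mul,
    integral_Ioi_rpow_of_lt (by norm_num) ht]
  rw [show (-2 : ℝ) + 1 = -1 by norm_num, Real.rpow_neg_one]
  field_simp

lemma integrableOn_div_sq (c : ℝ) {t : ℝ} (ht : 0 < t) :
    IntegrableOn (fun s => (c / s) ^ 2) (Set.Ioi t) volume := by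
  have h := (integrableOn_Ioi_rpow_of_lt (show (-2:ℝ) < -1 by norm_num) ht).const_mul (c ^ 2)
  apply MeasureTheory.IntegrableOn.congr_fun h ?_ measurableSet_Ioi
  intro s hs
  have hs0 : 0 < s := ht.trans hs
  simp only
  rw [Real.rpow_neg hs0.le, div_pow,
    show ((2:ℝ)) = ((2:ℕ):ℝ) by norm_num, Real.rpow_natCast]
  field_simp

/-- if `F(t) = G(t) + O(t⁻²)` with `G(t) = ∫_t^∞ F²` and
`F(t) ∼ t⁻¹`, then `F(t) = 1/(t + O(log t))`; in particular `t F(t) → 1`. -/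
theorem F_asymptotics (F : ℝ → ℝ) (hF_cont : Continuous F)
    (c₁ c₂ T : ℝ) (hc₁ : 0 < c₁) (hc₁₂ : c₁ ≤ c₂) (hT : 0 < T)
    (hF_bounds : ∀ t : ℝ, T ≤ t → c₁ / t ≤ F t ∧ F t ≤ c₂ / t)
    (hG_int : ∀ t : ℝ, T ≤ t →
      MeasureTheory.IntegrableOn (fun s => (F s) ^ 2) (Set.Ioi t) volume)
    (hFG : (fun t : ℝ => F t - ∫ s in Set.Ioi t, (F s) ^ 2) =O[atTop]
      (fun t : ℝ => 1 / t ^ 2)) :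
    (∃ C : ℝ, 0 < C ∧ ∀ᶠ t : ℝ in atTop, |1 / F t - t| ≤ C * Real.log t) ∧
    Tendsto (fun t : ℝ => t * F t) atTop (nhds 1) := by
  set G : ℝ → ℝ := fun t => ∫ s in Set.Ioi t, (F s) ^ 2 with hGdef
  have hc₂ : 0 < c₂ := lt_of_lt_of_le hc₁ hc₁₂
  obtain ⟨K, hK, hKbd⟩ := hFG.exists_pos
  rw [Asymptotics.isBigOWith_iff] at hKbd
  obtain ⟨T₂, hT₂⟩ := eventually_atTop.mp hKbd
  set a : ℝ := max (max (T + 1) T₂) 1 with ha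
  have haT : T < a := lt_of_lt_of_le (lt_add_one T) (le_max_of_le_left (le_max_left _ _))
  have ha1 : (1:ℝ) ≤ a := le_max_right _ _
  have ha0 : (0:ℝ) < a := lt_of_lt_of_le one_pos ha1
  have haT₂ : T₂ ≤ a := le_trans (le_max_right _ _) (le_max_left _ _)
  have hFpos : ∀ t, T ≤ t → 0 < F t := fun t ht =>
    lt_of_lt_of_le (div_pos hc₁ (hT.trans_le ht)) (hF_bounds t ht).1
  -- bound on |F - G|
  have hFGbd : ∀ t, a ≤ t → |F t - G t| ≤ K / t ^ 2 := by
    intro t ht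
    have ht1 : (1:ℝ) ≤ t := ha1.trans ht
    have h := hT₂ t (haT₂.trans ht)
    rw [Real.norm_eq_abs, Real.norm_eq_abs] at h
    have : |1 / t ^ 2| = 1 / t ^ 2 := abs_of_pos (by positivity)
    rw [this] at h
    calc |F t - G t| ≤ K * (1 / t ^ 2) := h
      _ = K / t ^ 2 := by ring
  -- bounds on G
  have hGlb : ∀ t, a ≤ t → c₁ ^ 2 / t ≤ G t := by
    intro t ht
    have ht0 : 0 < t := ha0.trans_le ht
    have hTt : T ≤ t := haT.le.trans ht
    calc c₁ ^ 2 / t = ∫ s in Set.Ioi t, (c₁ / s) ^ 2 := (integral_Ioi_div_sq c₁ ht0).symm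
      _ ≤ G t := by
        apply MeasureTheory.setIntegral_mono_on (integrableOn_div_sq c₁ ht0)
          (hG_int t hTt) measurableSet_Ioi
        intro s hs
        have hs0 : 0 < s := ht0.trans hs
        exact pow_le_pow_left₀ (by positivity) (hF_bounds s (hTt.trans hs.le)).1 2
  have hGub : ∀ t, a ≤ t → G t ≤ c₂ ^ 2 / t := by
    intro t ht
    have ht0 : 0 < t := ha0.trans_le ht
    have hTt : T ≤ t := haT.le.trans ht
    calc G t ≤ ∫ s in Set.Ioi t, (c₂ / s) ^ 2 := by
          apply MeasureTheory.setIntegral_mono_on (hG_int t hTt)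
            (integrableOn_div_sq c₂ ht0) measurableSet_Ioi
          intro s hs
          exact pow_le_pow_left₀ (hFpos s (hTt.trans hs.le)).le (hF_bounds s (hTt.trans hs.le)).2 2
      _ = c₂ ^ 2 / t := integral_Ioi_div_sq c₂ ht0
  have hGpos : ∀ t, a ≤ t → 0 < G t := fun t ht =>
    lt_of_lt_of_le (div_pos (by positivity) (ha0.trans_le ht)) (hGlb t ht)
  -- derivative of G
  have hcont2 : Continuous (fun s => F s ^ 2) := hF_cont.pow 2
  have hGderiv : ∀ t, T < t → HasDerivAt G (-(F t ^ 2)) t := by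
    intro t ht
    have key : ∀ s, T ≤ s → G s = G T - ∫ u in T..s, F u ^ 2 := by
      intro s hs
      have hsplit : Set.Ioc T s ∪ Set.Ioi s = Set.Ioi T := Set.Ioc_union_Ioi_eq_Ioi hs
      have hdisj : Disjoint (Set.Ioc T s) (Set.Ioi s) := Set.Ioc_disjoint_Ioi le_rfl
      have h1 : IntegrableOn (fun u => F u ^ 2) (Set.Ioc T s) volume :=
        hcont2.integrableOn_Ioc
      have h2 := hG_int s hs
      have hu := MeasureTheory.setIntegral_union hdisj measurableSet_Ioi h1 h2
        (f := fun u => F u ^ 2) (μ := volume)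
      rw [hsplit] at hu
      rw [intervalIntegral.integral_of_le hs]
      simp only [hGdef] at *
      linarith [hu]
    have hD : HasDerivAt (fun s => G T - ∫ u in T..s, F u ^ 2) (-(F t ^ 2)) t := by
      have h := intervalIntegral.integral_hasDerivAt_right
        (hcont2.intervalIntegrable T t)
        (hcont2.stronglyMeasurableAtFilter volume (nhds t)) hcont2.continuousAt
      exact ((hasDerivAt_const t (G T)).sub h).congr_deriv (by ring)
    apply hD.congr_of_eventuallyEq
    filter_upwards [Ioi_mem_nhds ht] with s hs
    exact key s (le_of_lt hs)
  set φ : ℝ → ℝ := fun s => (G s)⁻¹ with hφdef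
  have hφderiv : ∀ t, a ≤ t → HasDerivAt φ (F t ^ 2 / G t ^ 2) t := by
    intro t ht
    have h := (hGderiv t (haT.trans_le ht)).inv (hGpos t ht).ne'
    rw [neg_neg] at h; exact h
  set C₀ : ℝ := K * (c₂ + c₂ ^ 2) / c₁ ^ 4 with hC₀def
  have hC₀ : 0 < C₀ := by positivity
  have hφ'bd : ∀ t, a ≤ t → |F t ^ 2 / G t ^ 2 - 1| ≤ C₀ / t := by
    intro t ht
    have ht0 : 0 < t := ha0.trans_le ht
    have hTt : T ≤ t := haT.le.trans ht
    have hG := hGpos t ht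
    have hF := hFpos t hTt
    have hnum : |F t ^ 2 - G t ^ 2| ≤ K / t ^ 2 * ((c₂ + c₂ ^ 2) / t) := by
      have : F t ^ 2 - G t ^ 2 = (F t - G t) * (F t + G t) := by ring
      rw [this, abs_mul]
      have h1 : |F t + G t| ≤ (c₂ + c₂ ^ 2) / t := by
        rw [abs_of_pos (by positivity)]
        have := (hF_bounds t hTt).2
        have := hGub t ht
        rw [add_div]
        linarith
      exact mul_le_mul (hFGbd t ht) h1 (abs_nonneg _) (by positivity)
    have hden : c₁ ^ 4 / t ^ 2 ≤ G t ^ 2 := by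
      have h := hGlb t ht
      calc c₁ ^ 4 / t ^ 2 = (c₁ ^ 2 / t) ^ 2 := by ring
        _ ≤ G t ^ 2 := pow_le_pow_left₀ (by positivity) h 2
    rw [div_sub_one (by positivity : G t ^ 2 ≠ 0), abs_div, abs_of_pos (by positivity : (0:ℝ) < G t ^ 2)]
    calc |F t ^ 2 - G t ^ 2| / G t ^ 2
        ≤ (K / t ^ 2 * ((c₂ + c₂ ^ 2) / t)) / (c₁ ^ 4 / t ^ 2) :=
          div_le_div₀ (by positivity) hnum (by positivity) hden
      _ = C₀ / t := by rw [hC₀def]; field_simp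
  -- monotonicity argument
  have hinter : interior (Set.Ici a) = Set.Ioi a := interior_Ici
  have hφcont : ContinuousOn φ (Set.Ici a) := fun t ht =>
    ((hφderiv t ht).continuousAt).continuousWithinAt
  have hlogcont : ContinuousOn (fun s => C₀ * Real.log s) (Set.Ici a) := by
    apply ContinuousOn.mul continuousOn_const
    apply Real.continuousOn_log.mono
    intro s hs
    exact ne_of_gt (ha0.trans_le hs)
  have hderivu : ∀ t ∈ Set.Ioi a, HasDerivAt (fun s => C₀ * Real.log s + s - φ s)
      (C₀ * t⁻¹ + 1 - F t ^ 2 / G t ^ 2) t := by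
    intro t ht
    have ht0 : (0:ℝ) < t := ha0.trans ht
    exact (((Real.hasDerivAt_log ht0.ne').const_mul C₀).add (hasDerivAt_id t)).sub
      (hφderiv t (le_of_lt ht))
  have hderivv : ∀ t ∈ Set.Ioi a, HasDerivAt (fun s => C₀ * Real.log s - s + φ s)
      (C₀ * t⁻¹ - 1 + F t ^ 2 / G t ^ 2) t := by
    intro t ht
    have ht0 : (0:ℝ) < t := ha0.trans ht
    exact (((Real.hasDerivAt_log ht0.ne').const_mul C₀).sub (hasDerivAt_id t)).add
      (hφderiv t (le_of_lt ht))
  have hu : MonotoneOn (fun s => C₀ * Real.log s + s - φ s) (Set.Ici a) := by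
    apply monotoneOn_of_deriv_nonneg (convex_Ici a)
    · exact (hlogcont.add continuousOn_id).sub hφcont
    · rw [hinter]
      intro t ht
      exact ((hderivu t ht).differentiableAt).differentiableWithinAt
    · rw [hinter]
      intro t ht
      rw [(hderivu t ht).deriv]
      have hb := hφ'bd t (le_of_lt ht)
      rw [abs_le] at hb
      have ht0 : (0:ℝ) < t := ha0.trans ht
      have : C₀ * t⁻¹ = C₀ / t := by ring
      rw [this]
      linarith [hb.2]
  have hv : MonotoneOn (fun s => C₀ * Real.log s - s + φ s) (Set.Ici a) := by
    apply monotoneOn_of_deriv_nonneg (convex_Ici a)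
    · exact (hlogcont.sub continuousOn_id).add hφcont
    · rw [hinter]
      intro t ht
      exact ((hderivv t ht).differentiableAt).differentiableWithinAt
    · rw [hinter]
      intro t ht
      rw [(hderivv t ht).deriv]
      have hb := hφ'bd t (le_of_lt ht)
      rw [abs_le] at hb
      have ht0 : (0:ℝ) < t := ha0.trans ht
      have : C₀ * t⁻¹ = C₀ / t := by ring
      rw [this]
      linarith [hb.1]
  set D₁ : ℝ := |φ a - a| with hD₁def
  have hφbound : ∀ t, a ≤ t → |φ t - t| ≤ D₁ + C₀ * Real.log t := by
    intro t ht
    have h1 := hu (Set.self_mem_Ici) (Set.mem_Ici.mpr ht) ht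
    have h2 := hv (Set.self_mem_Ici) (Set.mem_Ici.mpr ht) ht
    simp only at h1 h2
    have hloga : 0 ≤ Real.log a := Real.log_nonneg ha1
    have hlogm : Real.log a ≤ Real.log t := Real.log_le_log ha0 ht
    rw [abs_le]
    rw [hD₁def]
    constructor
    · have := abs_nonneg (φ a - a)
      have habs : -(φ a - a) ≤ |φ a - a| := neg_le_abs _
      nlinarith [h2]
    · have habs : φ a - a ≤ |φ a - a| := le_abs_self _
      nlinarith [h1]
  -- |1/F - φ| bounded
  set M : ℝ := K / c₁ ^ 3 with hMdef
  have hE : ∀ t, a ≤ t → |1 / F t - φ t| ≤ M := by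
    intro t ht
    have ht0 : 0 < t := ha0.trans_le ht
    have hTt : T ≤ t := haT.le.trans ht
    have hF := hFpos t hTt
    have hG := hGpos t ht
    have heq : 1 / F t - φ t = (G t - F t) / (F t * G t) := by
      rw [hφdef]
      field_simp
    rw [heq, abs_div, abs_of_pos (mul_pos hF hG)]
    have hnum : |G t - F t| ≤ K / t ^ 2 := by rw [abs_sub_comm]; exact hFGbd t ht
    have hden : c₁ ^ 3 / t ^ 2 ≤ F t * G t := by
      have h1 := (hF_bounds t hTt).1
      have h2 := hGlb t ht
      calc c₁ ^ 3 / t ^ 2 = (c₁ / t) * (c₁ ^ 2 / t) := by ring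
        _ ≤ F t * G t := mul_le_mul h1 h2 (by positivity) hF.le
    calc |G t - F t| / (F t * G t) ≤ (K / t ^ 2) / (c₁ ^ 3 / t ^ 2) :=
        div_le_div₀ (by positivity) hnum (by positivity) hden
      _ = M := by rw [hMdef]; field_simp
  -- main eventual bound
  set b : ℝ := max a (Real.exp (D₁ + M)) with hbdef
  have hmain : ∀ t, b ≤ t → |1 / F t - t| ≤ (C₀ + 1) * Real.log t := by
    intro t ht
    have hta : a ≤ t := le_trans (le_max_left _ _) ht
    have hlogt : D₁ + M ≤ Real.log t := by
      have h := Real.log_le_log (Real.exp_pos _) (le_trans (le_max_right _ _) ht)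
      rwa [Real.log_exp] at h
    have h1 := hφbound t hta
    have h2 := hE t hta
    have hlog0 : 0 ≤ Real.log t := Real.log_nonneg (ha1.trans hta)
    calc |1 / F t - t| ≤ |1 / F t - φ t| + |φ t - t| := abs_sub_le _ _ _
      _ ≤ M + (D₁ + C₀ * Real.log t) := add_le_add h2 h1
      _ ≤ (C₀ + 1) * Real.log t := by nlinarith
  constructor
  · exact ⟨C₀ + 1, by positivity, (eventually_ge_atTop b).mono hmain⟩
  · rw [← tendsto_sub_nhds_zero_iff]
    have htend : Tendsto (fun t : ℝ => c₂ * (C₀ + 1) * (Real.log t / t)) atTop (nhds 0) := by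
      have h := Real.isLittleO_log_id_atTop.tendsto_div_nhds_zero
      have h2 := h.const_mul (c₂ * (C₀ + 1))
      simpa using h2
    apply squeeze_zero_norm' ?_ htend
    · filter_upwards [eventually_ge_atTop b] with t ht
      have hta : a ≤ t := le_trans (le_max_left _ _) ht
      have ht0 : 0 < t := ha0.trans_le hta
      have hTt : T ≤ t := haT.le.trans hta
      have hF := hFpos t hTt
      have heq : t * F t - 1 = F t * (t - 1 / F t) := by field_simp
      rw [Real.norm_eq_abs, heq, abs_mul, abs_of_pos hF, abs_sub_comm]
      have h1 := hmain t ht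
      have h2 := (hF_bounds t hTt).2
      have hlog0 : 0 ≤ Real.log t := Real.log_nonneg (ha1.trans hta)
      calc F t * |1 / F t - t| ≤ (c₂ / t) * ((C₀ + 1) * Real.log t) :=
          mul_le_mul h2 h1 (abs_nonneg _) (by positivity)
        _ = c₂ * (C₀ + 1) * (Real.log t / t) := by ring
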